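/- Let V and W be finite-dimensional real inner product spaces. Let a : V × V → ℝ be a bilinear form which is coercive, i.e. there is α > 0 with a(v, v) ≥ α·‖v‖² for all v ∈ V; let d : W × W → ℝ be a positive semidefinite bilinear form; let b : V × W → ℝ be bilinear; and let c₀ > 0, τ > 0. Then for every pair of linear functionals F : V → ℝ and G : W → ℝ there exists a unique pair (u, p) ∈ V × W such that a(u, v) − b(v, p) = F(v) for all v ∈ V, and c₀·⟨p, q⟩ + b(u, q) + τ·d(p, q) = G(q) for all q ∈ W. -/
import Mathlib

open scoped RealInnerProductSpace

set_option maxHeartbeats 1600000 in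
/-- Unique solvability of one backward-Euler step of the weak Galerkin scheme
(equations (21)–(22)), abstract version with `c₀ > 0`. -/
theorem backward_euler_step_unique_solvability
    {V W : Type*} [NormedAddCommGroup V] [InnerProductSpace ℝ V]
    [NormedAddCommGroup W] [InnerProductSpace ℝ W]
    [FiniteDimensional ℝ V] [FiniteDimensional ℝ W]
    (a : V →ₗ[ℝ] V →ₗ[ℝ] ℝ)
    (α : ℝ) (hα : 0 < α) (ha_coercive : ∀ v : V, α * ‖v‖ ^ 2 ≤ a v v)
    (d : W →ₗ[ℝ] W →ₗ[ℝ] ℝ) (hd_pos : ∀ q : W, 0 ≤ d q q)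
    (b : V →ₗ[ℝ] W →ₗ[ℝ] ℝ)
    (c₀ : ℝ) (hc₀ : 0 < c₀) (τ : ℝ) (hτ : 0 < τ) :
    ∀ (F : V →ₗ[ℝ] ℝ) (G : W →ₗ[ℝ] ℝ),
      ∃! up : V × W,
        (∀ v : V, a up.1 v - b v up.2 = F v) ∧
        (∀ q : W, c₀ * ⟪up.2, q⟫ + b up.1 q + τ * d up.2 q = G q) := by
  intro F G
  -- the combined bilinear form
  set B : (V × W) →ₗ[ℝ] (V × W) →ₗ[ℝ] ℝ :=
    LinearMap.mk₂ ℝ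
      (fun x y => a x.1 y.1 - b y.1 x.2 + c₀ * ⟪x.2, y.2⟫ + b x.1 y.2 + τ * d x.2 y.2)
      (by intro x x' y
          simp [inner_add_left, map_add, LinearMap.add_apply]; ring)
      (by intro r x y
          simp [inner_smul_left, map_smul, LinearMap.smul_apply, smul_eq_mul]; ring)
      (by intro x y y'
          simp [inner_add_right, map_add, LinearMap.add_apply]; ring)
      (by intro r x y
          simp [inner_smul_right, map_smul, LinearMap.smul_apply, smul_eq_mul]; ring)
    with hB
  have hBinj : Function.Injective B := by
    rw [← LinearMap.ker_eq_bot, LinearMap.ker_eq_bot']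
    intro x hx
    have h0 : B x x = 0 := by simp [hx]
    simp only [hB, LinearMap.mk₂_apply] at h0
    have hxx : a x.1 x.1 + c₀ * ⟪x.2, x.2⟫ + τ * d x.2 x.2 = 0 := by linarith
    have h1 : (0:ℝ) ≤ a x.1 x.1 := le_trans (by positivity) (ha_coercive x.1)
    have h2 : (0:ℝ) ≤ c₀ * ⟪x.2, x.2⟫ := by
      have := real_inner_self_nonneg (x := x.2); positivity
    have h3 : (0:ℝ) ≤ τ * d x.2 x.2 := by have := hd_pos x.2; positivity
    have ha0 : a x.1 x.1 = 0 := by linarith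
    have hp0 : c₀ * ⟪x.2, x.2⟫ = 0 := by linarith
    have hu : x.1 = 0 := by
      have h5 : ‖x.1‖ ^ 2 ≤ 0 := by nlinarith [ha_coercive x.1]
      have h6 : ‖x.1‖ ^ 2 = 0 := le_antisymm h5 (by positivity)
      have h7 : ‖x.1‖ = 0 := sq_eq_zero_iff.mp h6
      simpa using h7
    have hp : x.2 = 0 := by
      have h8 : ⟪x.2, x.2⟫ = (0:ℝ) := (mul_eq_zero.mp hp0).resolve_left hc₀.ne'
      simpa using (inner_self_eq_zero (𝕜 := ℝ)).mp h8
    exact Prod.ext hu hp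
  have hBsurj : Function.Surjective B := by
    refine (LinearMap.injective_iff_surjective_of_finrank_eq_finrank ?_).mp hBinj
    exact (Subspace.dual_finrank_eq (V := V × W)).symm
  -- the key equivalence
  have key : ∀ x : V × W,
      ((∀ v : V, a x.1 v - b v x.2 = F v) ∧
       (∀ q : W, c₀ * ⟪x.2, q⟫ + b x.1 q + τ * d x.2 q = G q)) ↔
      B x = F.comp (LinearMap.fst ℝ V W) + G.comp (LinearMap.snd ℝ V W) := by
    intro x
    constructor
    · rintro ⟨h1, h2⟩
      refine LinearMap.ext ?_
      rintro ⟨v, q⟩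
      have e1 := h1 v
      have e2 := h2 q
      simp only [hB, LinearMap.mk₂_apply, LinearMap.add_apply, LinearMap.comp_apply,
        LinearMap.fst_apply, LinearMap.snd_apply]
      linarith
    · intro h
      constructor
      · intro v
        have := congrArg (fun (f : (V × W) →ₗ[ℝ] ℝ) => f (v, 0)) h
        simpa [hB] using this
      · intro q
        have := congrArg (fun (f : (V × W) →ₗ[ℝ] ℝ) => f (0, q)) h
        simpa [hB] using this
  obtain ⟨x, hx⟩ := hBsurj (F.comp (LinearMap.fst ℝ V W) + G.comp (LinearMap.snd ℝ V W))
  refine ⟨x, (key x).mpr hx, fun y hy => hBinj ?_⟩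
  rw [(key y).mp hy, hx]
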